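/- Given a planar grid drawing Γ of a tree with diameter d, scale it by S = 2·rpw·d·(4d+1) to obtain Γ₁. Then for every edge e = (v,u) with v the start vertex, there is a lattice point z_e on the segment of e in Γ₁ such that: (1) the disk of radius rpw·d centered at z_e is contained in the disk of radius rpw·d·(4d+1) centered at Γ₁(v); and (2) for any two distinct edges e₁, e₂ with a common start vertex v, the disks of radius rpw around z_{e₁} and z_{e₂} are disjoint. -/

import Mathlib

lemma lattice_dist_ge_one (x y : EuclideanSpace ℝ (Fin 2))
    (hx : ∀ i, ∃ n : ℤ, x i = (n : ℝ)) (hy : ∀ i, ∃ n : ℤ, y i = (n : ℝ))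
    (hne : x ≠ y) : (1 : ℝ) ≤ dist x y := by
  have : ∃ i, x i ≠ y i := by
    by_contra h
    push_neg at h
    exact hne (PiLp.ext h)
  obtain ⟨i, hi⟩ := this
  obtain ⟨m, hm⟩ := hx i
  obtain ⟨n, hn⟩ := hy i
  have h1 : (1 : ℝ) ≤ dist (x i) (y i) := by
    rw [Real.dist_eq, hm, hn]
    have hmn : m ≠ n := by
      intro h; apply hi; rw [hm, hn, h]
    have : (1 : ℤ) ≤ |m - n| := Int.one_le_abs (sub_ne_zero.mpr hmn)
    calc (1:ℝ) ≤ (|m - n| : ℤ) := by exact_mod_cast this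
      _ = |(m : ℝ) - n| := by push_cast [abs_sub_comm]; rw [abs_sub_comm]
  calc (1:ℝ) ≤ dist (x i) (y i) := h1
    _ ≤ dist x y := by
        rw [EuclideanSpace.dist_eq]
        have h2 : dist (x i) (y i) ^ 2 ≤ ∑ j, dist (x j) (y j) ^ 2 :=
          Finset.single_le_sum (f := fun j => dist (x j) (y j) ^ 2)
            (fun j _ => sq_nonneg _) (Finset.mem_univ i)
        calc dist (x i) (y i) = Real.sqrt (dist (x i) (y i) ^ 2) :=
              (Real.sqrt_sq dist_nonneg).symm
          _ ≤ _ := Real.sqrt_le_sqrt h2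


/-- let `pos` be a planar (crossing-free) straight-line grid drawing
of a tree with pairwise vertex distances at most the integer `d ≥ 1` (the
diameter), let `rpw ≥ 1` be an integer (the rooted pathwidth), and scale by
`S = 2·rpw·d·(4d+1)`.  Then one can choose, for every directed edge `(v,u)`
(`v` the start vertex), a lattice point `z v u` on the scaled segment from
`S•pos v` to `S•pos u` such that: (1) the disk of radius `rpw·d` around `z v u`
is contained in the disk of radius `rpw·d·(4d+1)` around `S•pos v`; and (2) for
two distinct edges with common start vertex `v`, the disks of radius `rpw`
around the chosen points are disjoint. -/
theorem stmt_17 {V : Type*} [Fintype V] (G : SimpleGraph V) (hT : G.IsTree)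
    (pos : V → EuclideanSpace ℝ (Fin 2))
    (hgrid : ∀ v i, ∃ n : ℤ, pos v i = (n : ℝ))
    (hinj : Function.Injective pos)
    (hcf : ∀ a b c e : V, G.Adj a b → G.Adj c e →
      ∀ p, p ∈ segment ℝ (pos a) (pos b) → p ∈ segment ℝ (pos c) (pos e) →
        ∃ x : V, (x = a ∨ x = b) ∧ (x = c ∨ x = e) ∧ p = pos x)
    (d rpw S : ℕ) (hd1 : 1 ≤ d) (hrpw : 1 ≤ rpw)
    (hd : ∀ a b : V, dist (pos a) (pos b) ≤ (d : ℝ))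
    (hS : S = 2 * rpw * d * (4 * d + 1)) :
    ∃ z : V → V → EuclideanSpace ℝ (Fin 2),
      (∀ v u : V, G.Adj v u →
        (∀ i, ∃ n : ℤ, z v u i = (n : ℝ)) ∧
        z v u ∈ segment ℝ ((S : ℝ) • pos v) ((S : ℝ) • pos u) ∧
        Metric.ball (z v u) ((rpw : ℝ) * d) ⊆
          Metric.ball ((S : ℝ) • pos v) ((rpw : ℝ) * d * (4 * d + 1))) ∧
      (∀ v u₁ u₂ : V, G.Adj v u₁ → G.Adj v u₂ → u₁ ≠ u₂ →
        Disjoint (Metric.ball (z v u₁) (rpw : ℝ))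
          (Metric.ball (z v u₂) (rpw : ℝ))) := by
  have hd' : (1:ℝ) ≤ (d:ℝ) := by exact_mod_cast hd1
  have hrpw' : (1:ℝ) ≤ (rpw:ℝ) := by exact_mod_cast hrpw
  set c : ℝ := 2 * rpw * d with hc
  have hc0 : (0:ℝ) < c := by rw [hc]; positivity
  have hSr : (S : ℝ) = c * (4 * d + 1) := by rw [hS, hc]; push_cast; ring
  refine ⟨fun v u => (S : ℝ) • pos v + c • (pos u - pos v), ?_, ?_⟩
  · intro v u _
    refine ⟨?_, ?_, ?_⟩
    · intro i
      obtain ⟨m, hm⟩ := hgrid v i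
      obtain ⟨n, hn⟩ := hgrid u i
      refine ⟨(S : ℤ) * m + (2 * rpw * d : ℤ) * (n - m), ?_⟩
      simp only [PiLp.add_apply, PiLp.smul_apply, PiLp.sub_apply, smul_eq_mul, hm, hn, hc]
      push_cast; ring
    · rw [segment_eq_image']
      refine ⟨1 / (4 * (d:ℝ) + 1), ⟨by positivity, ?_⟩, ?_⟩
      · rw [div_le_one (by positivity)]; linarith
      · show (S:ℝ) • pos v + (1 / (4 * (d:ℝ) + 1)) • ((S:ℝ) • pos u - (S:ℝ) • pos v)
            = (S:ℝ) • pos v + c • (pos u - pos v)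
        rw [← smul_sub, smul_smul]
        congr 1
        rw [hSr]
        field_simp
    · intro x hx
      simp only [Metric.mem_ball] at hx ⊢
      have hzc : dist ((S : ℝ) • pos v + c • (pos u - pos v)) ((S : ℝ) • pos v) ≤ c * d := by
        rw [dist_eq_norm]
        have : (S : ℝ) • pos v + c • (pos u - pos v) - (S : ℝ) • pos v
            = c • (pos u - pos v) := by abel
        rw [this, norm_smul, Real.norm_eq_abs, abs_of_pos hc0]
        have := hd u v
        rw [dist_eq_norm] at this
        nlinarith [norm_nonneg (pos u - pos v)]
      calc dist x ((S : ℝ) • pos v)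
          ≤ dist x ((S : ℝ) • pos v + c • (pos u - pos v))
            + dist ((S : ℝ) • pos v + c • (pos u - pos v)) ((S : ℝ) • pos v) :=
            dist_triangle _ _ _
        _ < (rpw : ℝ) * d + c * d := by linarith
        _ ≤ (rpw : ℝ) * d * (4 * d + 1) := by rw [hc]; nlinarith
  · intro v u₁ u₂ h1 h2 hne
    apply Metric.ball_disjoint_ball
    have hpd : pos u₁ ≠ pos u₂ := fun h => hne (hinj h)
    have h1d : (1:ℝ) ≤ dist (pos u₁) (pos u₂) :=
      lattice_dist_ge_one _ _ (hgrid u₁) (hgrid u₂) hpd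
    have hzz : dist ((S : ℝ) • pos v + c • (pos u₁ - pos v))
        ((S : ℝ) • pos v + c • (pos u₂ - pos v)) = c * dist (pos u₁) (pos u₂) := by
      rw [dist_eq_norm, dist_eq_norm]
      have : (S : ℝ) • pos v + c • (pos u₁ - pos v)
          - ((S : ℝ) • pos v + c • (pos u₂ - pos v)) = c • (pos u₁ - pos u₂) := by
        module
      rw [this, norm_smul, Real.norm_eq_abs, abs_of_pos hc0]
    rw [hzz, hc]
    nlinarith
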